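/- Every CL-polynomial has a palindromic h*-polynomial. That is, if f(z) = b(z)·∏_{i=0}^{m}(z^2 + z + c_i) with all c_i ≥ 1/4 real, where b(z) = a if deg f = d is even and b(z) = a(2z+1) if d is odd (a a nonzero constant), then writing ∑_{k≥0} f(k)t^k = h*(t)/(1-t)^{d+1}, the coefficients of h* satisfy h*_i = h*_{d-i} for all 0 ≤ i ≤ d. -/

import Mathlib

open Polynomial Finset

private lemma sum_range_add'' {M : Type*} [AddCommMonoid M] (f : ℕ → M) (m n : ℕ) :
    ∑ k ∈ range (m + n), f k = (∑ k ∈ range m, f k) + ∑ k ∈ range n, f (m + k) := by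
  induction n with
  | zero => simp
  | succ n ih =>
    rw [← Nat.add_assoc, sum_range_succ, ih, sum_range_succ, add_assoc]

private lemma findiff (n : ℕ) : ∀ (p : Polynomial ℝ), p.degree < (n : ℕ) → ∀ x : ℝ,
    ∑ k ∈ range (n + 1), (-1 : ℝ) ^ k * ((n.choose k : ℝ)) * p.eval (x - k) = 0 := by
  induction n with
  | zero =>
    intro p hp x
    have : p = 0 := degree_eq_bot.mp (Nat.WithBot.lt_zero_iff.mp (by simpa using hp))
    simp [this]
  | succ n ih =>
    intro p hp x
    by_cases hp0 : p = 0
    · simp [hp0]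
    set q := p - p.comp (X - C 1) with hq
    have hqc : (p.comp (X - C 1)).natDegree = p.natDegree := by
      rw [natDegree_comp, natDegree_X_sub_C, mul_one]
    have hlc : (p.comp (X - C 1)).leadingCoeff = p.leadingCoeff := by
      rw [leadingCoeff_comp (by rw [natDegree_X_sub_C]; exact one_ne_zero), leadingCoeff_X_sub_C,
        one_pow, mul_one]
    have hcne : p.comp (X - C 1) ≠ 0 := by
      intro hh
      apply hp0
      rw [← leadingCoeff_eq_zero, ← hlc, hh, leadingCoeff_zero]
    have hdq : q.degree < (n : ℕ) := by
      have h1 : q.degree < p.degree := by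
        apply degree_sub_lt _ hp0 hlc.symm
        rw [degree_eq_natDegree hp0, degree_eq_natDegree hcne, hqc]
      have h2 : p.natDegree ≤ n :=
        Nat.lt_succ_iff.mp (((natDegree_lt_iff_degree_lt hp0).mpr (by exact_mod_cast hp)))
      refine lt_of_lt_of_le h1 ?_
      rw [degree_eq_natDegree hp0]
      exact_mod_cast Nat.cast_le.mpr h2
    have hqe : ∀ y : ℝ, q.eval y = p.eval y - p.eval (y - 1) := by
      intro y; simp [hq, eval_comp]
    have key := ih q hdq x
    rw [show n + 1 + 1 = (n + 1) + 1 from rfl,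
      Finset.sum_range_succ' (fun k => (-1 : ℝ) ^ k * (((n+1).choose k : ℝ)) * p.eval (x - k)) (n+1)]
    have e1 : ∑ k ∈ range (n + 1), (-1 : ℝ) ^ (k+1) * (((n+1).choose (k+1) : ℝ)) * p.eval (x - (k+1 : ℕ))
        = ∑ k ∈ range (n + 1), ((-1 : ℝ) ^ (k+1) * ((n.choose k : ℝ)) * p.eval (x - (k+1 : ℕ))
          + (-1 : ℝ) ^ (k+1) * ((n.choose (k+1) : ℝ)) * p.eval (x - (k+1 : ℕ))) := by
      apply Finset.sum_congr rfl
      intro k _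
      rw [Nat.choose_succ_succ]
      push_cast
      ring
    rw [e1, Finset.sum_add_distrib]
    -- second piece: ∑_{k∈range(n+1)} (-1)^{k+1} C(n,k+1) p(x-(k+1)) ; its last term is 0
    have e2 : ∑ k ∈ range (n + 1), (-1 : ℝ) ^ (k+1) * ((n.choose (k+1) : ℝ)) * p.eval (x - (k+1 : ℕ))
        = ∑ k ∈ range n, (-1 : ℝ) ^ (k+1) * ((n.choose (k+1) : ℝ)) * p.eval (x - (k+1 : ℕ)) := by
      rw [sum_range_succ, Nat.choose_succ_self]
      simp
    -- rewrite ih sum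
    have e3 : ∑ k ∈ range (n + 1), (-1 : ℝ) ^ k * ((n.choose k : ℝ)) * q.eval (x - k)
        = ∑ k ∈ range (n + 1), ((-1 : ℝ) ^ k * ((n.choose k : ℝ)) * p.eval (x - k)
          - (-1 : ℝ) ^ k * ((n.choose k : ℝ)) * p.eval (x - k - 1)) := by
      apply Finset.sum_congr rfl
      intro k _
      rw [hqe]
      ring
    rw [e3, Finset.sum_sub_distrib] at key
    have e4 : ∑ k ∈ range (n + 1), (-1 : ℝ) ^ k * ((n.choose k : ℝ)) * p.eval (x - k)
        = (∑ k ∈ range n, (-1 : ℝ) ^ (k+1) * ((n.choose (k+1) : ℝ)) * p.eval (x - (k+1 : ℕ)))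
          + (-1 : ℝ) ^ 0 * ((n.choose 0 : ℝ)) * p.eval (x - (0 : ℕ)) := by
      rw [Finset.sum_range_succ' (fun k => (-1 : ℝ) ^ k * ((n.choose k : ℝ)) * p.eval (x - k)) n]
    have e5 : ∀ k : ℕ, (x - (k : ℝ)) - 1 = x - ((k + 1 : ℕ) : ℝ) := by
      intro k; push_cast; ring
    have e6 : ∑ k ∈ range (n+1), (-1 : ℝ) ^ k * ((n.choose k : ℝ)) * p.eval (x - (k:ℝ) - 1)
        = ∑ k ∈ range (n+1), (-1 : ℝ) ^ k * ((n.choose k : ℝ)) * p.eval (x - ((k + 1 : ℕ) : ℝ)) := by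
      apply Finset.sum_congr rfl
      intro k _
      rw [e5]
    rw [e4, e6] at key
    -- key : (∑ range n (-1)^{k+1} C(n,k+1) p(x-(k+1)) + p x) - ∑ range (n+1) (-1)^k C(n,k) p(x-(k+1)) = 0
    rw [e2]
    simp only [pow_zero, Nat.choose_zero_right, Nat.cast_one, Nat.cast_zero, sub_zero, one_mul] at key ⊢
    -- goal now: ∑ range(n+1) (-1)^{k+1} C(n,k) p(x-(k+1)) + ∑ range n (-1)^{k+1} C(n,k+1) p(x-(k+1)) + p x = 0
    have e7 : ∑ k ∈ range (n+1), (-1 : ℝ) ^ (k+1) * ((n.choose k : ℝ)) * p.eval (x - ((k + 1 : ℕ) : ℝ))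
        = - ∑ k ∈ range (n+1), (-1 : ℝ) ^ k * ((n.choose k : ℝ)) * p.eval (x - ((k + 1 : ℕ) : ℝ)) := by
      rw [← Finset.sum_neg_distrib]
      apply Finset.sum_congr rfl
      intro k _
      ring
    rw [e7]
    linarith [key]

private lemma coeff_one_sub_X_pow (n j : ℕ) :
    PowerSeries.coeff (R := ℝ) j ((1 - PowerSeries.X) ^ n) = (-1 : ℝ) ^ j * (n.choose j : ℝ) := by
  have hexp : (1 - PowerSeries.X : PowerSeries ℝ) ^ n
      = ∑ k ∈ range (n + 1), PowerSeries.C ((-1 : ℝ) ^ k * (n.choose k : ℝ)) * PowerSeries.X ^ k := by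
    rw [sub_eq_add_neg, add_comm, add_pow]
    apply Finset.sum_congr rfl
    intro k _
    rw [one_pow, mul_one, neg_pow]
    simp [mul_comm, mul_assoc, mul_left_comm]
  rw [hexp, map_sum]
  simp only [PowerSeries.coeff_C_mul, PowerSeries.coeff_X_pow]
  rw [Finset.sum_eq_single j]
  · simp
  · intro k _ hk
    simp [Ne.symm hk]
  · intro hj
    simp only [mem_range, not_lt] at hj
    rw [Nat.choose_eq_zero_of_lt (by omega)]
    simp

/-- Every CL-polynomial has a palindromic h*-polynomial: if
`f = b ⬝ ∏ (X²+X+cᵢ)` with all `cᵢ ≥ 1/4` real and `b = C a` (if `deg f` even) or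
`b = C a (2X+1)` (if `deg f` odd), `a ≠ 0`, and `∑ f(k)tᵏ = h(t)/(1-t)^{d+1}` with
`d = deg f`, then `h` satisfies `hᵢ = h_{d-i}` for all `0 ≤ i ≤ d`. -/
theorem stmt3 (a : ℝ) (ha : a ≠ 0) (m : ℕ) (c : ℕ → ℝ) (hc : ∀ i ≤ m, (1 : ℝ)/4 ≤ c i)
    (b f : Polynomial ℝ)
    (hb : (Even f.natDegree → b = C a) ∧ (¬ Even f.natDegree → b = C a * (2 * X + 1)))
    (hf : f = b * ∏ i ∈ Finset.range (m + 1), (X ^ 2 + X + C (c i)))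
    (d : ℕ) (hd : d = f.natDegree)
    (h : Polynomial ℝ)
    (hser : PowerSeries.mk (fun k : ℕ => f.eval (k : ℝ)) * (1 - PowerSeries.X) ^ (d + 1)
      = (h : PowerSeries ℝ)) :
    ∀ i ≤ d, h.coeff i = h.coeff (d - i) := by
  intro i hi
  have hprod : ∀ x : ℝ, (∏ j ∈ Finset.range (m+1), (X^2 + X + C (c j))).eval (-1 - x)
      = (∏ j ∈ Finset.range (m+1), (X^2 + X + C (c j))).eval x := by
    intro x
    rw [eval_prod, eval_prod]
    apply Finset.prod_congr rfl
    intro j _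
    simp only [eval_add, eval_pow, eval_X, eval_C]
    ring
  have hsym : ∀ x : ℝ, f.eval (-1 - x) = (-1 : ℝ) ^ d * f.eval x := by
    intro x
    by_cases hev : Even f.natDegree
    · rw [hf, hb.1 hev, eval_mul, eval_mul, hprod, eval_C, eval_C,
        (show Even d from hd ▸ hev).neg_one_pow]
      ring
    · have hodd : Odd d := Nat.not_even_iff_odd.mp (hd ▸ hev)
      rw [hf, hb.2 hev, eval_mul, eval_mul, hprod, hodd.neg_one_pow]
      simp only [eval_mul, eval_add, eval_ofNat, eval_X, eval_C, eval_one]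
      ring
  have hdeg : f.degree < ((d + 1 : ℕ) : WithBot ℕ) := by
    refine lt_of_le_of_lt degree_le_natDegree ?_
    rw [← hd]
    exact_mod_cast Nat.lt_succ_self d
  have hco : ∀ n : ℕ, h.coeff n
      = ∑ k ∈ Finset.range (n + 1),
          f.eval (k : ℝ) * ((-1:ℝ)^(n - k) * (((d+1).choose (n - k) : ℝ))) := by
    intro n
    have hcg := congrArg (PowerSeries.coeff (R := ℝ) n) hser
    rw [Polynomial.coeff_coe] at hcg
    rw [← hcg, PowerSeries.coeff_mul, Finset.Nat.sum_antidiagonal_eq_sum_range_succ_mk]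
    apply Finset.sum_congr rfl
    intro k _
    rw [PowerSeries.coeff_mk, coeff_one_sub_X_pow]
  have hco' : ∀ n : ℕ, h.coeff n
      = ∑ k ∈ Finset.range (n + 1),
          (-1:ℝ)^k * (((d+1).choose k : ℝ)) * f.eval ((n : ℝ) - k) := by
    intro n
    rw [hco n]
    conv_lhs => rw [← Finset.sum_range_reflect]
    apply Finset.sum_congr rfl
    intro k hk
    rw [Finset.mem_range] at hk
    simp only [Nat.add_sub_cancel]
    rw [show n - (n - k) = k by omega, Nat.cast_sub (by omega : k ≤ n)]
    ring
  have hzero : ∀ x : ℝ, ∑ k ∈ Finset.range (d + 2),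
      (-1:ℝ)^k * (((d+1).choose k : ℝ)) * f.eval (x - k) = 0 :=
    fun x => findiff (d+1) f hdeg x
  have key := hzero ((d - i : ℕ) : ℝ)
  rw [show d + 2 = (d - i + 1) + (i + 1) by omega, sum_range_add''] at key
  rw [← hco' (d - i)] at key
  have e8 : ∑ j ∈ Finset.range (i+1), (-1:ℝ)^(d - i + 1 + j) * (((d+1).choose (d - i + 1 + j) : ℝ))
        * f.eval (((d - i : ℕ):ℝ) - ((d - i + 1 + j : ℕ):ℝ))
      = ∑ j ∈ Finset.range (i+1),
          - (f.eval (j:ℝ) * ((-1:ℝ)^(i - j) * (((d+1).choose (i - j) : ℝ)))) := by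
    apply Finset.sum_congr rfl
    intro j hj
    rw [Finset.mem_range] at hj
    have hij : j ≤ i := by omega
    have harg : ((d - i : ℕ):ℝ) - ((d - i + 1 + j : ℕ):ℝ) = -1 - (j:ℝ) := by
      push_cast
      ring
    rw [harg, hsym]
    have hch : (d+1).choose (d - i + 1 + j) = (d+1).choose (i - j) := by
      rw [show d - i + 1 + j = (d+1) - (i - j) by omega]
      exact Nat.choose_symm (by omega)
    rw [hch]
    have hsign : (-1:ℝ)^(d - i + 1 + j) * (-1:ℝ)^d = -(-1:ℝ)^(i - j) := by
      have h1 : (-1:ℝ)^(d - i + 1 + j) * (-1:ℝ)^d * (-1:ℝ)^(i - j) = (-1:ℝ)^(2*d+1) := by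
        rw [mul_assoc, ← pow_add, ← pow_add]
        congr 1
        omega
      have h2 : (-1:ℝ)^(i-j) * (-1:ℝ)^(i-j) = 1 := by
        rw [← pow_add]
        exact Even.neg_one_pow ⟨i - j, rfl⟩
      have h3 : (-1:ℝ)^(2*d+1) = -1 := Odd.neg_one_pow ⟨d, rfl⟩
      have h4 : (-1:ℝ)^(d - i + 1 + j) * (-1:ℝ)^d
          = ((-1:ℝ)^(d - i + 1 + j) * (-1:ℝ)^d * (-1:ℝ)^(i-j)) * (-1:ℝ)^(i-j) := by
        rw [mul_assoc, h2, mul_one]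
      rw [h4, h1, h3]
      ring
    linear_combination ((((d+1).choose (i - j) : ℝ)) * f.eval (j:ℝ)) * hsign
  rw [e8, Finset.sum_neg_distrib] at key
  rw [hco i]
  linarith [key]
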